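/- Let μ be a probability measure, L² = L²(μ) the real Hilbert space of square-integrable functions, and β ∈ (0,1). Let G be a bounded linear operator on L² that is positivity improving, and define T : L² → L² by Tψ = G(|ψ|^β), where |ψ|^β denotes the μ-a.e. pointwise function x ↦ |ψ(x)|^β (which lies in L² since μ is a probability measure and β < 1). Suppose h ∈ L² is a fixed point of T that is not μ-a.e. zero, and T is Fréchet differentiable at h with derivative D_h satisfying r(D_h) = limₙ ‖D_hⁿ‖^{1/n} < 1. Let χ = h/‖h‖. Then there exist finite constants C > 0 and b ∈ (0,1) and a neighborhood N of χ in L² such that for every initial point ψ = a·f with a ∈ ℝ, a ≠ 0 and f ∈ N, the iteration χ₁(ψ) = ψ, χ_{n+1}(ψ) = Tχₙ(ψ)/‖Tχₙ(ψ)‖ is well defined (each ‖Tχₙ(ψ)‖ > 0) and satisfies ‖χ_{n+1}(ψ) − χ‖ ≤ C bⁿ for all n ≥ 1. (Proposition 2 of the paper: local convergence of the normalized iteration for the nonlinear Perron-Frobenius problem.) -/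

import Mathlib

open MeasureTheory Filter

/-- The normalized iteration `χ₁(ψ) = ψ`, `χ_{n+1}(ψ) = Tχₙ(ψ)/‖Tχₙ(ψ)‖`
(so `normIter T ψ n = χ_{n+1}(ψ)`). -/
noncomputable def normIter {E : Type*} [NormedAddCommGroup E] [NormedSpace ℝ E]
    (T : E → E) (ψ : E) : ℕ → E
  | 0 => ψ
  | n + 1 => ‖T (normIter T ψ n)‖⁻¹ • T (normIter T ψ n)

theorem T_smul {X : Type*} [MeasurableSpace X] (μ : Measure X) [IsProbabilityMeasure μ]
    (β : ℝ) (hβ0 : 0 < β) (hβ1 : β < 1)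
    (G : Lp ℝ 2 μ →L[ℝ] Lp ℝ 2 μ)
    (T : Lp ℝ 2 μ → Lp ℝ 2 μ)
    (hT : ∀ ψ g : Lp ℝ 2 μ, (∀ᵐ x ∂μ, g x = |ψ x| ^ β) → T ψ = G g)
    (c : ℝ) (ψ : Lp ℝ 2 μ) : T (c • ψ) = |c| ^ β • T ψ := by
  have hcont : Continuous fun t : ℝ => |t| ^ β :=
    continuous_abs.rpow_const (fun t => Or.inr hβ0.le)
  have hmeas : AEStronglyMeasurable (fun x => |(ψ : X → ℝ) x| ^ β) μ :=
    hcont.comp_aestronglyMeasurable (Lp.aestronglyMeasurable ψ)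
  have hgmem : MemLp (fun x => (1 : ℝ) + ‖(ψ : X → ℝ) x‖) 2 μ :=
    (memLp_const (1 : ℝ)).add (Lp.memLp ψ).norm
  have hbound : ∀ᵐ x ∂μ, ‖|(ψ : X → ℝ) x| ^ β‖ ≤ ‖(1 : ℝ) + ‖(ψ : X → ℝ) x‖‖ := by
    filter_upwards with x
    have h0 : (0:ℝ) ≤ |(ψ : X → ℝ) x| ^ β := Real.rpow_nonneg (abs_nonneg _) _
    have key : |(ψ : X → ℝ) x| ^ β ≤ 1 + ‖(ψ : X → ℝ) x‖ := by
      rw [Real.norm_eq_abs]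
      rcases le_total |(ψ : X → ℝ) x| 1 with ht | ht
      · have := Real.rpow_le_one (abs_nonneg _) ht hβ0.le
        linarith [abs_nonneg ((ψ : X → ℝ) x)]
      · have h1 : |(ψ : X → ℝ) x| ^ β ≤ |(ψ : X → ℝ) x| ^ (1:ℝ) :=
          Real.rpow_le_rpow_of_exponent_le ht hβ1.le
        rw [Real.rpow_one] at h1
        linarith
    calc ‖|(ψ : X → ℝ) x| ^ β‖ = |(ψ : X → ℝ) x| ^ β := Real.norm_of_nonneg h0
      _ ≤ 1 + ‖(ψ : X → ℝ) x‖ := key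
      _ = ‖(1 : ℝ) + ‖(ψ : X → ℝ) x‖‖ := (Real.norm_of_nonneg (by positivity)).symm
  have hmem : MemLp (fun x => |(ψ : X → ℝ) x| ^ β) 2 μ := MemLp.of_le hgmem hmeas hbound
  set g : Lp ℝ 2 μ := hmem.toLp _ with hgdef
  have hg : ∀ᵐ x ∂μ, g x = |(ψ : X → ℝ) x| ^ β := hmem.coeFn_toLp
  have h1 : T ψ = G g := hT ψ g hg
  have h2 : T (c • ψ) = G (|c| ^ β • g) := by
    apply hT
    filter_upwards [hg, Lp.coeFn_smul c ψ, Lp.coeFn_smul (|c| ^ β) g] with x hx1 hx2 hx3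
    rw [hx3, hx2]
    simp only [Pi.smul_apply, smul_eq_mul]
    rw [hx1, abs_mul, Real.mul_rpow (abs_nonneg _) (abs_nonneg _)]
  rw [h2, G.map_smul, ← h1]

theorem normalize_dist {E : Type*} [NormedAddCommGroup E] [NormedSpace ℝ E]
    (x y : E) (hy : 0 < ‖y‖) (hx : ‖y‖ / 2 ≤ ‖x‖) :
    ‖‖x‖⁻¹ • x - ‖y‖⁻¹ • y‖ ≤ 4 * ‖x - y‖ / ‖y‖ := by
  have hx0 : 0 < ‖x‖ := lt_of_lt_of_le (by linarith) hx
  have key : ‖x‖⁻¹ • x - ‖y‖⁻¹ • y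
      = ‖x‖⁻¹ • (x - y) + (‖x‖⁻¹ - ‖y‖⁻¹) • y := by
    rw [smul_sub, sub_smul]; abel
  rw [key]
  have h1 : ‖‖x‖⁻¹ • (x - y)‖ = ‖x‖⁻¹ * ‖x - y‖ := by
    rw [norm_smul, Real.norm_eq_abs, abs_of_nonneg (by positivity)]
  have h2 : ‖(‖x‖⁻¹ - ‖y‖⁻¹) • y‖ = |‖x‖⁻¹ - ‖y‖⁻¹| * ‖y‖ := by
    rw [norm_smul, Real.norm_eq_abs]
  have h3 : |‖x‖⁻¹ - ‖y‖⁻¹| * ‖y‖ ≤ ‖x‖⁻¹ * ‖x - y‖ := by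
    have e1 : ‖x‖⁻¹ - ‖y‖⁻¹ = (‖y‖ - ‖x‖) / (‖x‖ * ‖y‖) := by
      field_simp
    rw [e1, abs_div, abs_of_pos (by positivity : (0:ℝ) < ‖x‖ * ‖y‖)]
    have e2 : |‖y‖ - ‖x‖| ≤ ‖x - y‖ := by
      have := abs_norm_sub_norm_le y x
      rwa [show y - x = -(x - y) by abel, norm_neg] at this
    rw [div_mul_eq_mul_div, div_le_iff₀ (by positivity)]
    calc |‖y‖ - ‖x‖| * ‖y‖ ≤ ‖x - y‖ * ‖y‖ := by
          exact mul_le_mul_of_nonneg_right e2 (norm_nonneg _)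
      _ = ‖x‖⁻¹ * ‖x - y‖ * (‖x‖ * ‖y‖) := by field_simp
  have h4 : ‖x‖⁻¹ * ‖x - y‖ ≤ 2 / ‖y‖ * ‖x - y‖ := by
    apply mul_le_mul_of_nonneg_right _ (norm_nonneg _)
    have : ‖x‖⁻¹ ≤ (‖y‖ / 2)⁻¹ := inv_anti₀ (by linarith) hx
    rw [show (‖y‖ / 2)⁻¹ = 2 / ‖y‖ by rw [inv_div]] at this
    exact this
  calc ‖‖x‖⁻¹ • (x - y) + (‖x‖⁻¹ - ‖y‖⁻¹) • y‖
      ≤ ‖‖x‖⁻¹ • (x - y)‖ + ‖(‖x‖⁻¹ - ‖y‖⁻¹) • y‖ := norm_add_le _ _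
    _ ≤ ‖x‖⁻¹ * ‖x - y‖ + ‖x‖⁻¹ * ‖x - y‖ := by rw [h1, h2]; linarith
    _ ≤ 2 / ‖y‖ * ‖x - y‖ + 2 / ‖y‖ * ‖x - y‖ := by linarith
    _ = 4 * ‖x - y‖ / ‖y‖ := by ring

set_option maxHeartbeats 1000000 in
theorem stmt_7
    {X : Type*} [MeasurableSpace X] (μ : Measure X) [IsProbabilityMeasure μ]
    (β : ℝ) (hβ0 : 0 < β) (hβ1 : β < 1)
    (G : Lp ℝ 2 μ →L[ℝ] Lp ℝ 2 μ)
    (hG : ∀ ψ : Lp ℝ 2 μ, (∀ᵐ x ∂μ, 0 ≤ ψ x) → ψ ≠ 0 → ∀ᵐ x ∂μ, 0 < (G ψ) x)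
    (T : Lp ℝ 2 μ → Lp ℝ 2 μ)
    (hT : ∀ ψ g : Lp ℝ 2 μ, (∀ᵐ x ∂μ, g x = |ψ x| ^ β) → T ψ = G g)
    (h : Lp ℝ 2 μ) (hfix : T h = h) (hne : h ≠ 0)
    (Dh : Lp ℝ 2 μ →L[ℝ] Lp ℝ 2 μ) (hdiff : HasFDerivAt T Dh h)
    (hr : ∃ r : ℝ, r < 1 ∧
      Tendsto (fun n : ℕ => ‖Dh ^ n‖ ^ (1 / (n : ℝ))) atTop (nhds r)) :
    ∃ C : ℝ, 0 < C ∧ ∃ b : ℝ, 0 < b ∧ b < 1 ∧ ∃ N ∈ nhds (‖h‖⁻¹ • h),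
      ∀ a : ℝ, a ≠ 0 → ∀ f ∈ N,
        (∀ n : ℕ, 0 < ‖T (normIter T (a • f) n)‖) ∧
        (∀ n : ℕ, 1 ≤ n → ‖normIter T (a • f) n - ‖h‖⁻¹ • h‖ ≤ C * b ^ n) := by
  have hom : ∀ (c : ℝ) (ψ : Lp ℝ 2 μ), T (c • ψ) = |c| ^ β • T ψ :=
    fun c ψ => T_smul μ β hβ0 hβ1 G T hT c ψ
  have hhn : (0:ℝ) < ‖h‖ := norm_pos_iff.mpr hne
  obtain ⟨r, hr1, hrt⟩ := hr
  have hr0 : 0 ≤ r :=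
    ge_of_tendsto hrt (Eventually.of_forall fun n => Real.rpow_nonneg (norm_nonneg _) _)
  set b : ℝ := (r + 1) / 2 with hbdef
  have hb0 : 0 < b := by rw [hbdef]; linarith
  have hb1 : b < 1 := by rw [hbdef]; linarith
  have hrb : r < b := by rw [hbdef]; linarith
  obtain ⟨m, hmlt, hm1⟩ := ((hrt.eventually_lt_const hrb).and (eventually_ge_atTop 1)).exists
  have hm0 : m ≠ 0 := by omega
  have hmpos : 0 < m := hm1
  have hDm : ‖Dh ^ m‖ < b ^ m := by
    have h1 : (‖Dh ^ m‖ ^ (1 / (m:ℝ))) ^ m < b ^ m :=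
      pow_lt_pow_left₀ hmlt (Real.rpow_nonneg (norm_nonneg _) _) hm0
    rwa [one_div, Real.rpow_inv_natCast_pow (norm_nonneg _) hm0] at h1
  have hdm : HasFDerivAt (T^[m]) (Dh ^ m) h := hdiff.iterate hfix m
  have hfixm : ∀ n : ℕ, T^[n] h = h := fun n => Function.iterate_fixed hfix n
  set L : ℝ := ‖Dh‖ + 1 with hLdef
  have hL1 : (1:ℝ) ≤ L := by rw [hLdef]; linarith [norm_nonneg Dh]
  have hL0 : (0:ℝ) < L := lt_of_lt_of_le one_pos hL1
  -- single-step bound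
  obtain ⟨δ₁, hδ₁0, hstep0⟩ : ∃ δ₁ > 0, ∀ φ : Lp ℝ 2 μ, dist φ h < δ₁ →
      ‖T φ - T h - Dh (φ - h)‖ ≤ 1 * ‖φ - h‖ := by
    have := (hdiff.isLittleO).def one_pos
    rw [Metric.eventually_nhds_iff] at this
    obtain ⟨ε, hε, H⟩ := this
    exact ⟨ε, hε, fun φ hφ => H hφ⟩
  have hstep : ∀ φ : Lp ℝ 2 μ, ‖φ - h‖ < δ₁ → ‖T φ - h‖ ≤ L * ‖φ - h‖ := by
    intro φ hφ
    have h1 := hstep0 φ (by rwa [dist_eq_norm])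
    have key : T φ - h = (T φ - T h - Dh (φ - h)) + Dh (φ - h) := by rw [hfix]; abel
    rw [key, hLdef]
    refine le_trans (norm_add_le _ _) ?_
    have h2 := Dh.le_opNorm (φ - h)
    calc ‖T φ - T h - Dh (φ - h)‖ + ‖Dh (φ - h)‖
        ≤ 1 * ‖φ - h‖ + ‖Dh‖ * ‖φ - h‖ := add_le_add h1 h2
      _ = (‖Dh‖ + 1) * ‖φ - h‖ := by ring
  -- m-step bound
  set ε2 : ℝ := (b ^ m - ‖Dh ^ m‖) / 2 with hε2def
  have hε2 : 0 < ε2 := by rw [hε2def]; linarith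
  set c : ℝ := ‖Dh ^ m‖ + ε2 with hcdef
  have hc0 : 0 ≤ c := by rw [hcdef]; positivity
  have hcb : c < b ^ m := by rw [hcdef, hε2def]; linarith
  have hbm1 : b ^ m < 1 := pow_lt_one₀ hb0.le hb1 hm0
  have hc1 : c < 1 := hcb.trans hbm1
  obtain ⟨δ₂, hδ₂0, hstepm0⟩ : ∃ δ₂ > 0, ∀ φ : Lp ℝ 2 μ, dist φ h < δ₂ →
      ‖T^[m] φ - T^[m] h - (Dh ^ m) (φ - h)‖ ≤ ε2 * ‖φ - h‖ := by
    have := (hdm.isLittleO).def hε2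
    rw [Metric.eventually_nhds_iff] at this
    obtain ⟨ε, hε, H⟩ := this
    exact ⟨ε, hε, fun φ hφ => H hφ⟩
  have hstepm : ∀ φ : Lp ℝ 2 μ, ‖φ - h‖ < δ₂ → ‖T^[m] φ - h‖ ≤ c * ‖φ - h‖ := by
    intro φ hφ
    have h1 := hstepm0 φ (by rwa [dist_eq_norm])
    have key : T^[m] φ - h = (T^[m] φ - T^[m] h - (Dh ^ m) (φ - h)) + (Dh ^ m) (φ - h) := by
      rw [hfixm m]; abel
    rw [key, hcdef]
    refine le_trans (norm_add_le _ _) ?_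
    have h2 := (Dh ^ m).le_opNorm (φ - h)
    calc ‖T^[m] φ - T^[m] h - (Dh ^ m) (φ - h)‖ + ‖(Dh ^ m) (φ - h)‖
        ≤ ε2 * ‖φ - h‖ + ‖Dh ^ m‖ * ‖φ - h‖ := add_le_add h1 h2
      _ = (‖Dh ^ m‖ + ε2) * ‖φ - h‖ := by ring
  set K : ℝ := L ^ m / b ^ m with hKdef
  have hbm0 : (0:ℝ) < b ^ m := pow_pos hb0 m
  have hK0 : 0 < K := by rw [hKdef]; positivity
  have hK1 : 1 ≤ K := by
    rw [hKdef, le_div_iff₀ hbm0, one_mul]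
    calc b ^ m ≤ 1 := hbm1.le
      _ ≤ L ^ m := by rw [← one_pow m]; exact pow_le_pow_left₀ zero_le_one hL1 m
  set δ : ℝ := min (min (δ₁ / (2 * L ^ m)) (δ₂ / 2)) (‖h‖ / (2 * K)) with hδdef
  have hLm0 : (0:ℝ) < L ^ m := pow_pos hL0 m
  have hLm1 : (1:ℝ) ≤ L ^ m := by rw [← one_pow m]; exact pow_le_pow_left₀ zero_le_one hL1 m
  have hδ0 : 0 < δ := by
    rw [hδdef]
    apply lt_min (lt_min _ _) <;> positivity
  have hδa : L ^ m * δ ≤ δ₁ / 2 := by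
    have h1 : δ ≤ δ₁ / (2 * L ^ m) := le_trans (min_le_left _ _) (min_le_left _ _)
    calc L ^ m * δ ≤ L ^ m * (δ₁ / (2 * L ^ m)) := by
          exact mul_le_mul_of_nonneg_left h1 hLm0.le
      _ = δ₁ / 2 := by field_simp
  have hδb : δ < δ₂ := by
    have h1 : δ ≤ δ₂ / 2 := le_trans (min_le_left _ _) (min_le_right _ _)
    linarith
  have hδc : K * δ ≤ ‖h‖ / 2 := by
    have h1 : δ ≤ ‖h‖ / (2 * K) := min_le_right _ _
    calc K * δ ≤ K * (‖h‖ / (2 * K)) := mul_le_mul_of_nonneg_left h1 hK0.le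
      _ = ‖h‖ / 2 := by field_simp
  -- block iteration over multiples of m
  have blockA : ∀ ψ : Lp ℝ 2 μ, ‖ψ - h‖ ≤ δ → ∀ q : ℕ,
      ‖T^[m * q] ψ - h‖ ≤ c ^ q * ‖ψ - h‖ := by
    intro ψ hψ q
    induction q with
    | zero => simp
    | succ q ih =>
      have hcq1 : c ^ q ≤ 1 := pow_le_one₀ hc0 hc1.le
      have hφ : ‖T^[m * q] ψ - h‖ < δ₂ := by
        have : c ^ q * ‖ψ - h‖ ≤ ‖ψ - h‖ := by nlinarith [norm_nonneg (ψ - h)]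
        calc ‖T^[m * q] ψ - h‖ ≤ c ^ q * ‖ψ - h‖ := ih
          _ ≤ ‖ψ - h‖ := this
          _ ≤ δ := hψ
          _ < δ₂ := hδb
      have h1 := hstepm _ hφ
      have h2 : T^[m * (q+1)] ψ = T^[m] (T^[m * q] ψ) := by
        rw [show m * (q+1) = m + m * q by ring, Function.iterate_add_apply]
      rw [h2]
      calc ‖T^[m] (T^[m*q] ψ) - h‖ ≤ c * ‖T^[m*q] ψ - h‖ := h1
        _ ≤ c * (c ^ q * ‖ψ - h‖) := mul_le_mul_of_nonneg_left ih hc0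
        _ = c ^ (q+1) * ‖ψ - h‖ := by ring
  -- tail iteration
  have blockB : ∀ s : ℕ, ∀ φ : Lp ℝ 2 μ, L ^ s * ‖φ - h‖ ≤ δ₁ / 2 →
      ‖T^[s] φ - h‖ ≤ L ^ s * ‖φ - h‖ := by
    intro s
    induction s with
    | zero => intro φ _; simp
    | succ s ih =>
      intro φ hφ
      have hLs : L ^ s ≤ L ^ (s+1) := by
        calc L ^ s = L ^ s * 1 := by ring
          _ ≤ L ^ s * L := by nlinarith [pow_pos hL0 s]
          _ = L ^ (s+1) := by ring
      have hs : L ^ s * ‖φ - h‖ ≤ δ₁ / 2 := by nlinarith [norm_nonneg (φ - h)]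
      have h1 := ih φ hs
      have h2 : ‖T^[s] φ - h‖ < δ₁ := lt_of_le_of_lt (h1.trans hs) (by linarith)
      rw [Function.iterate_succ_apply']
      calc ‖T (T^[s] φ) - h‖ ≤ L * ‖T^[s] φ - h‖ := hstep _ h2
        _ ≤ L * (L ^ s * ‖φ - h‖) := mul_le_mul_of_nonneg_left h1 hL0.le
        _ = L ^ (s+1) * ‖φ - h‖ := by ring
  -- main geometric estimate
  have hmain : ∀ ψ : Lp ℝ 2 μ, ‖ψ - h‖ ≤ δ → ∀ n : ℕ,
      ‖T^[n] ψ - h‖ ≤ K * b ^ n * δ := by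
    intro ψ hψ n
    have hsplit : T^[n] ψ = T^[n % m] (T^[m * (n / m)] ψ) := by
      rw [← Function.iterate_add_apply, show n % m + m * (n / m) = n from Nat.mod_add_div n m]
    have hA := blockA ψ hψ (n / m)
    have hcq1 : c ^ (n / m) ≤ 1 := pow_le_one₀ hc0 hc1.le
    have hφδ : ‖T^[m * (n / m)] ψ - h‖ ≤ δ := by
      calc ‖T^[m * (n / m)] ψ - h‖ ≤ c ^ (n / m) * ‖ψ - h‖ := hA
        _ ≤ ‖ψ - h‖ := by nlinarith [norm_nonneg (ψ - h)]
        _ ≤ δ := hψ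
    have hLs : L ^ (n % m) ≤ L ^ m :=
      pow_le_pow_right₀ hL1 (Nat.mod_lt n hmpos).le
    have hBpre : L ^ (n % m) * ‖T^[m * (n / m)] ψ - h‖ ≤ δ₁ / 2 := by
      calc L ^ (n % m) * ‖T^[m * (n / m)] ψ - h‖ ≤ L ^ m * δ :=
            mul_le_mul hLs hφδ (norm_nonneg _) hLm0.le
        _ ≤ δ₁ / 2 := hδa
    have hB := blockB (n % m) _ hBpre
    have hφc : ‖T^[m * (n / m)] ψ - h‖ ≤ c ^ (n / m) * δ :=
      hA.trans (mul_le_mul_of_nonneg_left hψ (pow_nonneg hc0 _))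
    have hc_pow : c ^ (n / m) ≤ b ^ (m * (n / m)) := by
      rw [pow_mul]
      exact pow_le_pow_left₀ hc0 hcb.le _
    have hexp : b ^ (m * (n / m)) * b ^ m ≤ b ^ n := by
      rw [← pow_add]
      refine pow_le_pow_of_le_one hb0.le hb1.le ?_
      have e1 := Nat.div_add_mod n m
      have e2 : n % m < m := Nat.mod_lt n hmpos
      omega
    have hcomb : L ^ m * c ^ (n / m) ≤ K * b ^ n := by
      rw [hKdef, div_mul_eq_mul_div, le_div_iff₀ hbm0]
      calc L ^ m * c ^ (n / m) * b ^ m ≤ L ^ m * b ^ (m * (n / m)) * b ^ m :=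
            mul_le_mul_of_nonneg_right (mul_le_mul_of_nonneg_left hc_pow hLm0.le) hbm0.le
        _ = L ^ m * (b ^ (m * (n / m)) * b ^ m) := by rw [mul_assoc]
        _ ≤ L ^ m * b ^ n := mul_le_mul_of_nonneg_left hexp hLm0.le
    calc ‖T^[n] ψ - h‖ = ‖T^[n % m] (T^[m * (n / m)] ψ) - h‖ := by rw [hsplit]
      _ ≤ L ^ (n % m) * ‖T^[m * (n / m)] ψ - h‖ := hB
      _ ≤ L ^ m * (c ^ (n / m) * δ) := mul_le_mul hLs hφc (norm_nonneg _) hLm0.le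
      _ = (L ^ m * c ^ (n / m)) * δ := by ring
      _ ≤ (K * b ^ n) * δ := mul_le_mul_of_nonneg_right hcomb hδ0.le
      _ = K * b ^ n * δ := by ring
  -- lower bound on norms of iterates
  have hlow : ∀ ψ : Lp ℝ 2 μ, ‖ψ - h‖ ≤ δ → ∀ n : ℕ, ‖h‖ / 2 ≤ ‖T^[n] ψ‖ := by
    intro ψ hψ n
    have h1 := hmain ψ hψ n
    have hbn1 : b ^ n ≤ 1 := pow_le_one₀ hb0.le hb1.le
    have h2 : K * b ^ n * δ ≤ K * δ := by
      calc K * b ^ n * δ ≤ K * 1 * δ :=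
            mul_le_mul_of_nonneg_right (mul_le_mul_of_nonneg_left hbn1 hK0.le) hδ0.le
        _ = K * δ := by ring
    have h3 : ‖h‖ - ‖T^[n] ψ - h‖ ≤ ‖T^[n] ψ‖ := by
      have h4 := norm_sub_norm_le h (T^[n] ψ)
      have h5 : ‖h - T^[n] ψ‖ = ‖T^[n] ψ - h‖ := by rw [norm_sub_rev]
      linarith
    linarith
  have hnz0 : ∀ ψ : Lp ℝ 2 μ, ‖ψ - h‖ ≤ δ → ∀ n : ℕ, T^[n] ψ ≠ 0 := by
    intro ψ hψ n h0
    have := hlow ψ hψ n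
    rw [h0, norm_zero] at this
    linarith
  -- normalization helper
  have helper : ∀ (e : ℝ), e ≠ 0 → ∀ v : Lp ℝ 2 μ,
      ‖T (e • v)‖⁻¹ • T (e • v) = ‖T v‖⁻¹ • T v := by
    intro e he v
    rw [hom e v]
    have hs : 0 < |e| ^ β := Real.rpow_pos_of_pos (abs_pos.mpr he) β
    rw [norm_smul, Real.norm_eq_abs, abs_of_pos hs, smul_smul, mul_inv]
    congr 1
    rw [mul_comm ((|e| ^ β)⁻¹) _, mul_assoc, inv_mul_cancel₀ hs.ne', mul_one]
  -- the iteration formula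
  have hiter : ∀ ψ : Lp ℝ 2 μ, ‖ψ - h‖ ≤ δ → ∀ (e : ℝ), e ≠ 0 → ∀ n : ℕ,
      normIter T (e • ψ) (n+1) = ‖T^[n+1] ψ‖⁻¹ • T^[n+1] ψ := by
    intro ψ hψ e he n
    induction n with
    | zero =>
      simp only [normIter]
      rw [helper e he ψ, Function.iterate_one]
    | succ n ih =>
      have ht : (0:ℝ) < ‖T^[n+1] ψ‖ := lt_of_lt_of_le (by linarith) (hlow ψ hψ (n+1))
      simp only [normIter] at ih ⊢
      rw [ih, helper _ (inv_ne_zero ht.ne') (T^[n+1] ψ),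
        show T (T^[n+1] ψ) = T^[n+1+1] ψ from (Function.iterate_succ_apply' T (n+1) ψ).symm]
  refine ⟨4 * K * δ / ‖h‖, by positivity, b, hb0, hb1,
    Metric.ball (‖h‖⁻¹ • h) (δ / ‖h‖), Metric.ball_mem_nhds _ (by positivity), ?_⟩
  intro a ha f hf
  set ψ := ‖h‖ • f with hψdef
  have hψh : ‖ψ - h‖ ≤ δ := by
    have hχ : ‖h‖ • (‖h‖⁻¹ • h) = h := by
      rw [smul_smul, mul_inv_cancel₀ hhn.ne', one_smul]
    have hsub : ψ - h = ‖h‖ • (f - ‖h‖⁻¹ • h) := by rw [hψdef, smul_sub, hχ]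
    have hdist : ‖f - ‖h‖⁻¹ • h‖ < δ / ‖h‖ := by
      rw [← dist_eq_norm]
      exact Metric.mem_ball.mp hf
    rw [hsub, norm_smul, Real.norm_eq_abs, abs_of_pos hhn]
    calc ‖h‖ * ‖f - ‖h‖⁻¹ • h‖ ≤ ‖h‖ * (δ / ‖h‖) :=
          mul_le_mul_of_nonneg_left hdist.le hhn.le
      _ = δ := by field_simp
  have hea : a * ‖h‖⁻¹ ≠ 0 := mul_ne_zero ha (inv_ne_zero hhn.ne')
  have hefa : a • f = (a * ‖h‖⁻¹) • ψ := by
    rw [hψdef, smul_smul, mul_assoc, inv_mul_cancel₀ hhn.ne', mul_one]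
  constructor
  · intro n
    cases n with
    | zero =>
      simp only [normIter]
      rw [hefa, hom]
      have h1 : T ψ ≠ 0 := by
        have := hnz0 ψ hψh 1
        rwa [Function.iterate_one] at this
      have hs : 0 < |a * ‖h‖⁻¹| ^ β := Real.rpow_pos_of_pos (abs_pos.mpr hea) β
      rw [norm_smul, Real.norm_eq_abs, abs_of_pos hs]
      exact mul_pos hs (norm_pos_iff.mpr h1)
    | succ n =>
      rw [hefa, hiter ψ hψh _ hea n]
      have ht0 : (0:ℝ) < ‖T^[n+1] ψ‖ := lt_of_lt_of_le (by linarith) (hlow ψ hψh (n+1))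
      rw [hom]
      have h1 : T (T^[n+1] ψ) = T^[n+2] ψ := (Function.iterate_succ_apply' T (n+1) ψ).symm
      rw [h1, norm_smul]
      have h2 : T^[n+2] ψ ≠ 0 := hnz0 ψ hψh (n+2)
      have hs : (0:ℝ) < |(‖T^[n+1] ψ‖⁻¹ : ℝ)| ^ β :=
        Real.rpow_pos_of_pos (abs_pos.mpr (inv_ne_zero ht0.ne')) β
      exact mul_pos (norm_pos_iff.mpr hs.ne') (norm_pos_iff.mpr h2)
  · intro n hn
    obtain ⟨k, rfl⟩ : ∃ k, n = k + 1 := ⟨n - 1, by omega⟩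
    rw [hefa, hiter ψ hψh _ hea k]
    have hx := hlow ψ hψh (k+1)
    have hnear := hmain ψ hψh (k+1)
    have hnd := normalize_dist (T^[k+1] ψ) h hhn hx
    calc ‖‖T^[k+1] ψ‖⁻¹ • T^[k+1] ψ - ‖h‖⁻¹ • h‖ ≤ 4 * ‖T^[k+1] ψ - h‖ / ‖h‖ := hnd
      _ ≤ 4 * (K * b ^ (k+1) * δ) / ‖h‖ := by gcongr
      _ = 4 * K * δ / ‖h‖ * b ^ (k+1) := by ring
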